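/- Let K → L be an extension of valuation fields of height 1 and M a torsion-free O_K-module. For a torsion-free module N over a height-1 valuation ring O with maximal ideal m, set N^div = ⋂_{0 ≠ π ∈ m} π·N and N^sep = N/N^div. Assume M^sep is bounded, i.e., there is an injective O_K-linear map M^sep → O_K^{⊕I} for some index set I. Then the canonical O_L-linear maps M^div ⊗_{O_K} O_L → (M ⊗_{O_K} O_L)^div and M^sep ⊗_{O_K} O_L → (M ⊗_{O_K} O_L)^sep are bijective. -/

import Mathlib

open TensorProduct

universe u

/-- The divisible submodule `N^div = ⋂_{0 ≠ π ∈ m} π·N` of a module `N` over a local ring. -/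
def divisibleSubmodule (O : Type*) [CommRing O] [IsLocalRing O]
    (N : Type*) [AddCommGroup N] [Module O N] : Submodule O N where
  carrier := {x | ∀ π : O, π ∈ IsLocalRing.maximalIdeal O → π ≠ 0 → ∃ y : N, x = π • y}
  zero_mem' := fun π _ _ => ⟨0, by simp⟩
  add_mem' := by
    intro a b ha hb π hπ h0
    obtain ⟨y, hy⟩ := ha π hπ h0
    obtain ⟨z, hz⟩ := hb π hπ h0
    exact ⟨y + z, by rw [hy, hz, smul_add]⟩
  smul_mem' := by
    intro c x hx π hπ h0
    obtain ⟨y, hy⟩ := hx π hπ h0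
    exact ⟨c • y, by rw [hy, smul_comm]⟩

lemma mem_divisibleSubmodule_iff {O : Type*} [CommRing O] [IsLocalRing O]
    {N : Type*} [AddCommGroup N] [Module O N] {x : N} :
    x ∈ divisibleSubmodule O N ↔
      ∀ π : O, π ∈ IsLocalRing.maximalIdeal O → π ≠ 0 → ∃ y : N, x = π • y := Iff.rfl

section Aux

variable {O : Type*} [CommRing O] [IsLocalRing O] [IsDomain O]
variable {M : Type*} [AddCommGroup M] [Module O M]

lemma div_smul_exists (htf : ∀ (r : O) (x : M), r • x = 0 → r = 0 ∨ x = 0)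
    {a : O} (ha : a ≠ 0) {x : M} (hx : x ∈ divisibleSubmodule O M) :
    ∃ y, y ∈ divisibleSubmodule O M ∧ x = a • y := by
  rw [mem_divisibleSubmodule_iff] at hx
  by_cases hu : IsUnit a
  · obtain ⟨u, rfl⟩ := hu
    refine ⟨(↑u⁻¹ : O) • x, Submodule.smul_mem _ _ hx, ?_⟩
    rw [smul_smul, Units.mul_inv, one_smul]
  · have ham : a ∈ IsLocalRing.maximalIdeal O := hu
    obtain ⟨y, hy⟩ := hx a ham ha
    refine ⟨y, ?_, hy⟩
    intro π hπ hπ0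
    obtain ⟨z, hz⟩ := hx (a * π) (Ideal.mul_mem_right π _ ham) (mul_ne_zero ha hπ0)
    have hz' : a • (y - π • z) = 0 := by
      rw [smul_sub, ← hy, smul_smul, ← hz, sub_self]
    rcases htf a _ hz' with h | h
    · exact absurd h ha
    · exact ⟨z, sub_eq_zero.mp h⟩

lemma baer_div (htf : ∀ (r : O) (x : M), r • x = 0 → r = 0 ∨ x = 0) :
    Module.Baer O ↥(divisibleSubmodule O M) := by
  intro I g
  by_cases hI : I = ⊥
  · refine ⟨0, fun x hx => ?_⟩
    have hx0 : x = 0 := by rw [hI] at hx; simpa using hx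
    subst hx0
    have h0 : (⟨(0 : O), hx⟩ : I) = 0 := Subtype.ext rfl
    rw [h0]; simp
  · obtain ⟨a, haI, ha0⟩ := (Submodule.ne_bot_iff I).mp hI
    obtain ⟨q, hqD, hq⟩ := div_smul_exists htf ha0 (g ⟨a, haI⟩).2
    set qD : ↥(divisibleSubmodule O M) := ⟨q, hqD⟩ with hqD'
    have hq' : g ⟨a, haI⟩ = a • qD := Subtype.ext hq
    refine ⟨LinearMap.toSpanSingleton O _ qD, fun x hx => ?_⟩
    have h2 : (a • (⟨x, hx⟩ : I)) = x • (⟨a, haI⟩ : I) :=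
      Subtype.ext (by simp [smul_eq_mul, mul_comm])
    have key : a • (g ⟨x, hx⟩ - x • qD) = 0 := by
      rw [smul_sub, ← map_smul, h2, map_smul, hq', smul_smul, smul_smul, mul_comm, sub_self]
    have keyM : a • (((g ⟨x, hx⟩ - x • qD) : ↥(divisibleSubmodule O M)) : M) = 0 := by
      have h3 := congrArg Subtype.val key
      simpa using h3
    rcases htf a _ keyM with h | h
    · exact absurd h ha0
    · have h4 : g ⟨x, hx⟩ - x • qD = 0 := Subtype.ext (by simpa using h)
      rw [LinearMap.toSpanSingleton_apply]
      exact (sub_eq_zero.mp h4).symm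

lemma exists_retraction (htf : ∀ (r : O) (x : M), r • x = 0 → r = 0 ∨ x = 0) :
    ∃ r : M →ₗ[O] ↥(divisibleSubmodule O M),
      r ∘ₗ (divisibleSubmodule O M).subtype = LinearMap.id :=
  (baer_div htf).extension_property _ (Submodule.injective_subtype _) LinearMap.id

lemma flat_of_torsionfree {O : Type*} [CommRing O] [IsDomain O] [ValuationRing O]
    {A : Type*} [AddCommGroup A] [Module O A]
    (htfA : ∀ (a : O) (x : A), a • x = 0 → a = 0 ∨ x = 0) : Module.Flat O A := by
  rw [Module.Flat.iff_rTensor_injective]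
  intro I hI
  obtain ⟨a, ha⟩ := (IsBezout.isPrincipal_of_FG I hI).principal
  subst ha
  have haI : a ∈ Ideal.span {a} := Ideal.mem_span_singleton_self a
  have rep : ∀ t : ↥(Ideal.span {a} : Ideal O) ⊗[O] A,
      ∃ x : A, t = (⟨a, haI⟩ : ↥(Ideal.span {a} : Ideal O)) ⊗ₜ[O] x := by
    intro t
    induction t using TensorProduct.induction_on with
    | zero => exact ⟨0, (TensorProduct.tmul_zero _ _).symm⟩
    | tmul s y =>
      obtain ⟨r, hr⟩ := Ideal.mem_span_singleton'.mp s.2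
      refine ⟨r • y, ?_⟩
      have hs : s = r • (⟨a, haI⟩ : ↥(Ideal.span {a} : Ideal O)) :=
        Subtype.ext (by simp [smul_eq_mul, hr])
      rw [hs, TensorProduct.smul_tmul]
    | add u v hu hv =>
      obtain ⟨x, rfl⟩ := hu
      obtain ⟨y, rfl⟩ := hv
      exact ⟨x + y, (TensorProduct.tmul_add _ _ _).symm⟩
  rw [injective_iff_map_eq_zero]
  intro t ht
  obtain ⟨x, rfl⟩ := rep t
  rw [LinearMap.rTensor_tmul] at ht
  by_cases ha0 : a = 0
  · subst ha0
    have h0 : (⟨(0 : O), haI⟩ : ↥(Ideal.span {(0:O)} : Ideal O)) = 0 := rfl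
    rw [h0, TensorProduct.zero_tmul]
  · have hax : a • x = 0 := by
      have h1 := congrArg (TensorProduct.lid O A) ht
      simpa using h1
    rcases htfA a x hax with h | h
    · exact absurd h ha0
    · rw [h, TensorProduct.tmul_zero]

end Aux

set_option maxHeartbeats 2000000 in
set_option synthInstance.maxHeartbeats 1000000 in
/-- Let `K → L` be an extension of valuation fields of height `1` and `M` a
torsion-free `O_K`-module whose separated quotient `M^sep = M/M^div` is bounded.  Then the
canonical `O_L`-linear maps `M^div ⊗_{O_K} O_L → (M ⊗_{O_K} O_L)^div` and
`M^sep ⊗_{O_K} O_L → (M ⊗_{O_K} O_L)^sep` are bijective.  (The first map is the restriction of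
`O_L ⊗ M^div → O_L ⊗ M`, so its bijectivity onto the divisible submodule is expressed by
injectivity together with the identification of its range with the divisible submodule; the
bijectivity of the second map is equivalent to the kernel of `O_L ⊗ M → O_L ⊗ M^sep` being the
divisible submodule of `O_L ⊗ M`.) -/
theorem statement8 (K : Type u) [Field K] (OK : ValuationSubring K)
    (hKnf : ¬ IsField ↥OK)
    (vK : Valuation K NNReal) (hvK : ∀ x : K, vK x ≤ 1 ↔ x ∈ OK)
    (L : Type*) [Field L] [Algebra K L] (OL : ValuationSubring L)
    (hLnf : ¬ IsField ↥OL)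
    (vL : Valuation L NNReal) (hvL : ∀ x : L, vL x ≤ 1 ↔ x ∈ OL)
    (hext : ∀ x : K, algebraMap K L x ∈ OL ↔ x ∈ OK)
    [Algebra ↥OK ↥OL]
    (hcomp : ∀ x : ↥OK, ((algebraMap ↥OK ↥OL x : ↥OL) : L) = algebraMap K L (x : K))
    (M : Type u) [AddCommGroup M] [Module ↥OK M]
    (htf : ∀ (r : ↥OK) (x : M), r • x = 0 → r = 0 ∨ x = 0)
    (hbounded : ∃ (ι : Type u)
        (f : (M ⧸ divisibleSubmodule ↥OK M) →ₗ[↥OK] (ι →₀ ↥OK)),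
      Function.Injective f) :
    Function.Injective
      (LinearMap.lTensor (R := ↥OK) ↥OL (divisibleSubmodule ↥OK M).subtype) ∧
    (Set.range (LinearMap.lTensor (R := ↥OK) ↥OL (divisibleSubmodule ↥OK M).subtype) =
      (divisibleSubmodule ↥OL (↥OL ⊗[↥OK] M) : Set (↥OL ⊗[↥OK] M))) ∧
    ((LinearMap.ker (LinearMap.lTensor (R := ↥OK) ↥OL (divisibleSubmodule ↥OK M).mkQ) :
        Set (↥OL ⊗[↥OK] M)) =
      (divisibleSubmodule ↥OL (↥OL ⊗[↥OK] M) : Set (↥OL ⊗[↥OK] M))) := by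
  classical
  have halg : Function.Injective (algebraMap K L) := (algebraMap K L).injective
  -- torsion-freeness of O_L over O_K
  have hA0 : ∀ a : ↥OK, a ≠ 0 → (algebraMap ↥OK ↥OL a) ≠ 0 := by
    intro a ha h
    apply ha
    have h1 : ((algebraMap ↥OK ↥OL a : ↥OL) : L) = 0 := by rw [h]; rfl
    rw [hcomp] at h1
    have h2 : (a : K) = 0 := halg (by simpa using h1)
    exact Subtype.ext h2
  have htfA : ∀ (a : ↥OK) (x : ↥OL), a • x = 0 → a = 0 ∨ x = 0 := by
    intro a x h
    by_cases ha : a = 0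
    · exact Or.inl ha
    · right
      rw [Algebra.smul_def] at h
      rcases mul_eq_zero.mp h with h' | h'
      · exact absurd h' (hA0 a ha)
      · exact h'
  have hflat : Module.Flat ↥OK ↥OL := flat_of_torsionfree htfA
  -- valuation facts
  have hmemL : ∀ y : ↥OL, (y : L) ≠ 0 → vL (y : L) < 1 →
      y ∈ IsLocalRing.maximalIdeal ↥OL := by
    intro y hy0 hy1
    rw [IsLocalRing.mem_maximalIdeal, mem_nonunits_iff]
    intro hu
    obtain ⟨z, hz⟩ := hu.exists_right_inv
    have hz1 : (y : L) * (z : L) = 1 := by exact_mod_cast congrArg Subtype.val hz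
    have hzle : vL (z : L) ≤ 1 := (hvL _).mpr z.2
    have hlt : (1 : NNReal) < 1 := by
      calc (1 : NNReal) = vL ((y : L) * (z : L)) := by rw [hz1, map_one]
      _ = vL (y : L) * vL (z : L) := by rw [Valuation.map_mul]
      _ ≤ vL (y : L) := mul_le_of_le_one_right zero_le hzle
      _ < 1 := hy1
    exact absurd hlt (lt_irrefl _)
  have hmemL' : ∀ y : ↥OL, y ∈ IsLocalRing.maximalIdeal ↥OL → y ≠ 0 →
      vL (y : L) < 1 ∧ vL (y : L) ≠ 0 := by
    intro y hy hy0
    have hyL : (y : L) ≠ 0 := fun h => hy0 (Subtype.ext h)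
    have h1 : vL (y : L) ≤ 1 := (hvL _).mpr y.2
    have hne : vL (y : L) ≠ 1 := by
      intro he
      have hv : vL ((y : L)⁻¹) ≤ 1 := by rw [map_inv₀, he]; simp
      have hinv : ((y : L)⁻¹) ∈ OL := (hvL _).mp hv
      apply mem_nonunits_iff.mp ((IsLocalRing.mem_maximalIdeal y).mp hy)
      exact IsUnit.of_mul_eq_one (a := y) ⟨(y : L)⁻¹, hinv⟩
        (Subtype.ext (by simpa using mul_inv_cancel₀ hyL))
    refine ⟨lt_of_le_of_ne h1 hne, fun h => hyL ((Valuation.zero_iff vL).mp h)⟩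
  -- a nonzero element of m_K and its image
  have hmK : IsLocalRing.maximalIdeal ↥OK ≠ ⊥ :=
    fun h => hKnf (IsLocalRing.isField_iff_maximalIdeal_eq.mpr h)
  obtain ⟨πK, hπKm, hπK0⟩ := (Submodule.ne_bot_iff _).mp hmK
  have hπKK : (πK : K) ≠ 0 := fun h => hπK0 (Subtype.ext h)
  have hcL : ((algebraMap ↥OK ↥OL πK : ↥OL) : L) = algebraMap K L (πK : K) := hcomp πK
  have hcne : ((algebraMap ↥OK ↥OL πK : ↥OL) : L) ≠ 0 := by
    rw [hcL]
    simp [map_eq_zero, hπKK]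
  have hπKunit : ¬ IsUnit πK := mem_nonunits_iff.mp ((IsLocalRing.mem_maximalIdeal πK).mp hπKm)
  have hvc1 : vL ((algebraMap ↥OK ↥OL πK : ↥OL) : L) < 1 := by
    have hle : vL ((algebraMap ↥OK ↥OL πK : ↥OL) : L) ≤ 1 :=
      (hvL _).mpr (algebraMap ↥OK ↥OL πK).2
    refine lt_of_le_of_ne hle ?_
    intro he
    have hv : vL ((algebraMap K L (πK : K))⁻¹) ≤ 1 := by
      rw [map_inv₀, ← hcL, he]; simp
    have h1 : algebraMap K L ((πK : K)⁻¹) ∈ OL := by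
      rw [map_inv₀]; exact (hvL _).mp hv
    have hK : (πK : K)⁻¹ ∈ OK := (hext _).mp h1
    exact hπKunit (IsUnit.of_mul_eq_one (a := πK) ⟨(πK : K)⁻¹, hK⟩
      (Subtype.ext (by simpa using mul_inv_cancel₀ hπKK)))
  -- division: powers of πK are divisible by any nonzero element of m_L
  have hdiv : ∀ π : ↥OL, π ∈ IsLocalRing.maximalIdeal ↥OL → π ≠ 0 →
      ∃ (n : ℕ) (u : ↥OL), algebraMap ↥OK ↥OL (πK ^ n) = π * u := by
    intro π hπ hπ0
    obtain ⟨hπlt, hπne⟩ := hmemL' π hπ hπ0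
    obtain ⟨n, hn⟩ := NNReal.exists_pow_lt_of_lt_one (zero_lt_iff.mpr hπne) hvc1
    have hπL0 : (π : L) ≠ 0 := fun h => hπ0 (Subtype.ext h)
    have hw : vL ((algebraMap K L (πK : K)) ^ n / (π : L)) ≤ 1 := by
      rw [map_div₀, map_pow, ← hcL]
      exact div_le_one_of_le₀ hn.le zero_le
    refine ⟨n, ⟨(algebraMap K L (πK : K)) ^ n / (π : L), (hvL _).mp hw⟩, ?_⟩
    apply Subtype.ext
    show ((algebraMap ↥OK ↥OL (πK ^ n) : ↥OL) : L) = _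
    rw [hcomp]
    push_cast
    rw [mul_comm, div_mul_cancel₀ _ hπL0]
  -- smallness in O_L
  have hmL : IsLocalRing.maximalIdeal ↥OL ≠ ⊥ :=
    fun h => hLnf (IsLocalRing.isField_iff_maximalIdeal_eq.mpr h)
  obtain ⟨πL0, hπL0m, hπL00⟩ := (Submodule.ne_bot_iff _).mp hmL
  have hsmall : ∀ c : ↥OL,
      (∀ π : ↥OL, π ∈ IsLocalRing.maximalIdeal ↥OL → π ≠ 0 → ∃ d, c = π * d) → c = 0 := by
    intro c hc
    by_contra hc0
    have hcL0 : (c : L) ≠ 0 := fun h => hc0 (Subtype.ext h)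
    have hcv : vL (c : L) ≠ 0 := fun h => hcL0 ((Valuation.zero_iff vL).mp h)
    obtain ⟨hv0lt, hv0ne⟩ := hmemL' πL0 hπL0m hπL00
    obtain ⟨n, hn⟩ := NNReal.exists_pow_lt_of_lt_one (zero_lt_iff.mpr hcv) hv0lt
    have hmem : πL0 ^ (n + 1) ∈ IsLocalRing.maximalIdeal ↥OL :=
      Ideal.pow_mem_of_mem _ hπL0m _ (Nat.succ_pos n)
    have hne : πL0 ^ (n + 1) ≠ 0 := pow_ne_zero _ hπL00
    obtain ⟨d, hd⟩ := hc (πL0 ^ (n + 1)) hmem hne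
    have hdL : (c : L) = (πL0 : L) ^ (n + 1) * (d : L) := by
      have := congrArg Subtype.val hd
      push_cast at this
      exact this
    have hle : vL (c : L) ≤ vL (πL0 : L) ^ n := by
      calc vL (c : L) = vL (πL0 : L) ^ (n + 1) * vL (d : L) := by
            rw [hdL, Valuation.map_mul, map_pow]
      _ ≤ vL (πL0 : L) ^ (n + 1) := mul_le_of_le_one_right zero_le ((hvL _).mpr d.2)
      _ ≤ vL (πL0 : L) ^ n := pow_le_pow_of_le_one zero_le hv0lt.le (Nat.le_succ n)
    exact absurd (lt_of_lt_of_le hn hle) (lt_irrefl _)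
  -- the retraction
  obtain ⟨r, hr⟩ := exists_retraction htf
  have hrd : ∀ d : ↥(divisibleSubmodule ↥OK M), r (d : M) = d :=
    fun d => LinearMap.congr_fun hr d
  -- injectivity of lTensor subtype
  have hri : ∀ t, LinearMap.lTensor (R := ↥OK) ↥OL r
      (LinearMap.lTensor (R := ↥OK) ↥OL (divisibleSubmodule ↥OK M).subtype t) = t := by
    intro t
    rw [← LinearMap.comp_apply, ← LinearMap.lTensor_comp, hr, LinearMap.lTensor_id,
      LinearMap.id_apply]
  have inj_i : Function.Injective
      (LinearMap.lTensor (R := ↥OK) ↥OL (divisibleSubmodule ↥OK M).subtype) :=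
    Function.LeftInverse.injective hri
  -- divisibility of O_L ⊗ D by powers of πK
  have hDdiv : ∀ (n : ℕ) (t : ↥OL ⊗[↥OK] ↥(divisibleSubmodule ↥OK M)),
      ∃ s, t = (πK ^ n) • s := by
    intro n t
    have hπn : (πK ^ n : ↥OK) ≠ 0 := pow_ne_zero _ hπK0
    induction t using TensorProduct.induction_on with
    | zero => exact ⟨0, (smul_zero _).symm⟩
    | tmul a d =>
      obtain ⟨y, hyD, hy⟩ := div_smul_exists htf hπn d.2
      refine ⟨a ⊗ₜ (⟨y, hyD⟩ : ↥(divisibleSubmodule ↥OK M)), ?_⟩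
      have hd : d = (πK ^ n) • (⟨y, hyD⟩ : ↥(divisibleSubmodule ↥OK M)) :=
        Subtype.ext (by simpa using hy)
      rw [hd, TensorProduct.tmul_smul]
    | add u v hu hv =>
      obtain ⟨s, rfl⟩ := hu
      obtain ⟨s', rfl⟩ := hv
      exact ⟨s + s', (smul_add _ _ _).symm⟩
  -- range of lTensor subtype lands in the divisible submodule
  have hrange_sub : ∀ t : ↥OL ⊗[↥OK] ↥(divisibleSubmodule ↥OK M),
      LinearMap.lTensor (R := ↥OK) ↥OL (divisibleSubmodule ↥OK M).subtype t ∈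
        divisibleSubmodule ↥OL (↥OL ⊗[↥OK] M) := by
    intro t
    rw [mem_divisibleSubmodule_iff]
    intro π hπ hπ0
    obtain ⟨n, u, hu⟩ := hdiv π hπ hπ0
    obtain ⟨s, rfl⟩ := hDdiv n t
    refine ⟨u • LinearMap.lTensor (R := ↥OK) ↥OL (divisibleSubmodule ↥OK M).subtype s, ?_⟩
    rw [map_smul, ← algebraMap_smul (↥OL) (πK ^ n), hu, mul_smul]
  -- composition is zero
  have hcomp0 : ∀ t, LinearMap.lTensor (R := ↥OK) ↥OL (divisibleSubmodule ↥OK M).mkQ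
      (LinearMap.lTensor (R := ↥OK) ↥OL (divisibleSubmodule ↥OK M).subtype t) = 0 := by
    intro t
    rw [← LinearMap.comp_apply, ← LinearMap.lTensor_comp]
    have h0 : (divisibleSubmodule ↥OK M).mkQ ∘ₗ (divisibleSubmodule ↥OK M).subtype = 0 := by
      ext d
      simp [Submodule.Quotient.mk_eq_zero]
    rw [h0, LinearMap.lTensor_zero, LinearMap.zero_apply]
  -- the splitting of the identity
  have hgex : ∃ g : (M ⧸ divisibleSubmodule ↥OK M) →ₗ[↥OK] M,
      (divisibleSubmodule ↥OK M).subtype ∘ₗ r + g ∘ₗ (divisibleSubmodule ↥OK M).mkQ =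
        LinearMap.id := by
    have hker : divisibleSubmodule ↥OK M ≤
        LinearMap.ker (LinearMap.id - (divisibleSubmodule ↥OK M).subtype ∘ₗ r) := by
      intro d hd
      rw [LinearMap.mem_ker, LinearMap.sub_apply, LinearMap.id_apply, LinearMap.comp_apply]
      have h2 : r d = ⟨d, hd⟩ := hrd ⟨d, hd⟩
      rw [h2]
      simp
    refine ⟨(divisibleSubmodule ↥OK M).liftQ _ hker, ?_⟩
    ext x
    simp only [LinearMap.add_apply, LinearMap.comp_apply, Submodule.mkQ_apply,
      Submodule.liftQ_apply, LinearMap.sub_apply, LinearMap.id_apply]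
    abel
  obtain ⟨g, hsplit⟩ := hgex
  -- kernel of lTensor mkQ is contained in the range of lTensor subtype
  have hker_sub : ∀ x : ↥OL ⊗[↥OK] M,
      LinearMap.lTensor (R := ↥OK) ↥OL (divisibleSubmodule ↥OK M).mkQ x = 0 →
      x ∈ Set.range (LinearMap.lTensor (R := ↥OK) ↥OL (divisibleSubmodule ↥OK M).subtype) := by
    intro x hx
    have h1 := congrArg (LinearMap.lTensor (R := ↥OK) ↥OL) hsplit
    rw [LinearMap.lTensor_add, LinearMap.lTensor_comp, LinearMap.lTensor_comp,
      LinearMap.lTensor_id] at h1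
    have h2 := LinearMap.congr_fun h1 x
    rw [LinearMap.add_apply, LinearMap.comp_apply, LinearMap.comp_apply, hx, map_zero,
      add_zero, LinearMap.id_apply] at h2
    exact ⟨_, h2⟩
  -- A-semilinearity of lTensor mkQ
  have hpA : ∀ (a : ↥OL) (x : ↥OL ⊗[↥OK] M),
      LinearMap.lTensor (R := ↥OK) ↥OL (divisibleSubmodule ↥OK M).mkQ (a • x) =
        a • LinearMap.lTensor (R := ↥OK) ↥OL (divisibleSubmodule ↥OK M).mkQ x := by
    intro a x
    have h := LinearMap.baseChange_eq_ltensor (A := ↥OL) (divisibleSubmodule ↥OK M).mkQ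
    rw [← h]
    exact map_smul (LinearMap.baseChange ↥OL (divisibleSubmodule ↥OK M).mkQ) a x
  -- boundedness: the divisible submodule of O_L ⊗ M^sep is zero
  obtain ⟨ι, f, hfinj⟩ := hbounded
  haveI := hflat
  have hftens : Function.Injective (LinearMap.lTensor (R := ↥OK) ↥OL f) :=
    Module.Flat.lTensor_preserves_injective_linearMap f hfinj
  set φ : ↥OL ⊗[↥OK] (ι →₀ ↥OK) →ₗ[↥OL] (ι →₀ ↥OL) :=
    LinearMap.liftBaseChange ↥OL (Finsupp.mapRange.linearMap (Algebra.linearMap ↥OK ↥OL))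
    with hφdef
  set ψ : (ι →₀ ↥OL) →ₗ[↥OL] ↥OL ⊗[↥OK] (ι →₀ ↥OK) :=
    Finsupp.lsum ℕ (fun i => LinearMap.toSpanSingleton ↥OL _
      ((1 : ↥OL) ⊗ₜ[↥OK] Finsupp.single i (1 : ↥OK))) with hψdef
  have hψφ : ∀ t, ψ (φ t) = t := by
    intro t
    induction t using TensorProduct.induction_on with
    | zero => simp
    | tmul a s =>
      rw [hφdef]
      rw [LinearMap.liftBaseChange_tmul, map_smul]
      induction s using Finsupp.induction_linear with
      | zero => simp
      | add f1 f2 h1 h2 =>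
        rw [map_add, map_add, smul_add, h1, h2, TensorProduct.tmul_add]
      | single i b =>
        rw [Finsupp.mapRange.linearMap_apply, Finsupp.mapRange_single]
        rw [hψdef]
        rw [Finsupp.lsum_single, LinearMap.toSpanSingleton_apply]
        rw [Algebra.linearMap_apply, algebraMap_smul, TensorProduct.smul_tmul',
          TensorProduct.smul_tmul]
        rw [TensorProduct.smul_tmul', smul_eq_mul, mul_one, Finsupp.smul_single,
          smul_eq_mul, mul_one]
    | add u v hu hv => rw [map_add, map_add, hu, hv]
  have hφinj : Function.Injective φ := Function.LeftInverse.injective hψφ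
  have hsep0 : ∀ x : ↥OL ⊗[↥OK] (M ⧸ divisibleSubmodule ↥OK M),
      (∀ π : ↥OL, π ∈ IsLocalRing.maximalIdeal ↥OL → π ≠ 0 → ∃ y, x = π • y) → x = 0 := by
    intro x hx
    have hfA : ∀ (a : ↥OL) z, LinearMap.lTensor (R := ↥OK) ↥OL f (a • z) =
        a • LinearMap.lTensor (R := ↥OK) ↥OL f z := by
      intro a z
      have h := LinearMap.baseChange_eq_ltensor (A := ↥OL) f
      rw [← h]
      exact map_smul (LinearMap.baseChange ↥OL f) a z
    set e : ↥OL ⊗[↥OK] (M ⧸ divisibleSubmodule ↥OK M) → (ι →₀ ↥OL) :=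
      fun z => φ (LinearMap.lTensor (R := ↥OK) ↥OL f z) with hedef
    have heinj : Function.Injective e := Function.Injective.comp hφinj hftens
    have hesmul : ∀ (a : ↥OL) z, e (a • z) = a • e z := by
      intro a z
      rw [hedef]
      simp only []
      rw [hfA, map_smul]
    have hcoord : ∀ j : ι, e x j = 0 := by
      intro j
      apply hsmall
      intro π hπ hπ0
      obtain ⟨y, hy⟩ := hx π hπ hπ0
      exact ⟨e y j, by rw [hy, hesmul, Finsupp.smul_apply, smul_eq_mul]⟩
    have hex0 : e x = 0 := Finsupp.ext hcoord
    have he0 : e 0 = 0 := by rw [hedef]; simp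
    exact heinj (hex0.trans he0.symm)
  -- divisible submodule is contained in the kernel
  have hdiv_ker : ∀ x : ↥OL ⊗[↥OK] M, x ∈ divisibleSubmodule ↥OL (↥OL ⊗[↥OK] M) →
      LinearMap.lTensor (R := ↥OK) ↥OL (divisibleSubmodule ↥OK M).mkQ x = 0 := by
    intro x hx
    rw [mem_divisibleSubmodule_iff] at hx
    apply hsep0
    intro π hπ hπ0
    obtain ⟨y, hy⟩ := hx π hπ hπ0
    exact ⟨LinearMap.lTensor (R := ↥OK) ↥OL (divisibleSubmodule ↥OK M).mkQ y,
      by rw [hy, hpA]⟩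
  refine ⟨inj_i, ?_, ?_⟩
  · apply Set.Subset.antisymm
    · rintro _ ⟨t, rfl⟩
      exact hrange_sub t
    · intro x hx
      exact hker_sub x (hdiv_ker x hx)
  · apply Set.Subset.antisymm
    · intro x hx
      rw [SetLike.mem_coe, LinearMap.mem_ker] at hx
      obtain ⟨t, rfl⟩ := hker_sub x hx
      exact hrange_sub t
    · intro x hx
      rw [SetLike.mem_coe, LinearMap.mem_ker]
      exact hdiv_ker x hx
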